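/- Let L be a split regular Hom-Leibniz algebra with root system Λ. If α ∈ Λ then α∘φ^{-z} ∈ Λ for every integer z. -/

import Mathlib

open Submodule

/-- A split regular Hom-Leibniz algebra: a vector space `L` over `K` with a bilinear
product, an algebra automorphism `φ` satisfying the Hom-Leibniz identity, together with
a distinguished abelian subalgebra `H` (with `φ|_H` given as `φH`). -/
structure SplitRegularHomLeibniz (K L : Type*) [Field K] [AddCommGroup L] [Module K L] where
  bracket : L →ₗ[K] L →ₗ[K] L
  φ : L ≃ₗ[K] L
  leibniz : ∀ x y z : L, bracket (bracket y z) (φ x)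
      = bracket (bracket y x) (φ z) + bracket (φ y) (bracket z x)
  φ_bracket : ∀ x y : L, φ (bracket x y) = bracket (φ x) (φ y)
  H : Submodule K L
  H_abelian : ∀ x ∈ H, ∀ y ∈ H, bracket x y = 0
  φH : H ≃ₗ[K] H
  φH_spec : ∀ h : H, (φH h : L) = φ h

namespace SplitRegularHomLeibniz

variable {K L : Type*} [Field K] [AddCommGroup L] [Module K L]
variable (A : SplitRegularHomLeibniz K L)

/-- The root space associated to a linear functional `α : H → K`. -/
def rootSpace (α : Module.Dual K A.H) : Submodule K L where
  carrier := {v | ∀ h : A.H, A.bracket v h = α h • A.φ v}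
  add_mem' := by
    intro a b ha hb h
    simp [map_add, ha h, hb h, smul_add]
  zero_mem' := by intro h; simp
  smul_mem' := by
    intro c a ha h
    simp only [map_smul, LinearMap.smul_apply, ha h]
    rw [smul_comm]

/-- The set of nonzero roots. -/
def roots : Set (Module.Dual K A.H) := {α | α ≠ 0 ∧ A.rootSpace α ≠ ⊥}

/-- The splitting condition : `L = H ⊕ (⊕_{α ∈ Λ} L_α)`. -/
def IsSplit : Prop :=
  (A.H ⊔ ⨆ α ∈ A.roots, A.rootSpace α) = ⊤ ∧
  iSupIndep
    (fun i : Option A.roots => Option.elim i A.H (fun α => A.rootSpace α.1))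

/-- `H` is a maximal abelian subalgebra. -/
def MaximalAbelian : Prop := ∀ H' : Submodule K L,
  (∀ x ∈ H', ∀ y ∈ H', A.bracket x y = 0) → H'.map A.φ.toLinearMap = H' →
    A.H ≤ H' → H' = A.H

/-- The map `α ↦ α ∘ φ⁻¹` on linear functionals on `H`. -/
def twist (α : Module.Dual K A.H) : Module.Dual K A.H :=
  α.comp A.φH.symm.toLinearMap

/-- The map `α ↦ α ∘ φ^{-z}` for `z : ℤ`. -/
def ztwist (z : ℤ) (α : Module.Dual K A.H) : Module.Dual K A.H :=
  α.comp ((A.φH ^ (-z)).toLinearMap)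

/-- Twisted partial sums of a chain of roots:
`s 0 = f 0`, `s (i+1) = (s i)∘φ⁻¹ + (f (i+1))∘φ⁻¹`. -/
def chainSums (f : ℕ → Module.Dual K A.H) : ℕ → Module.Dual K A.H
  | 0 => f 0
  | i + 1 => A.twist (chainSums f i + f (i + 1))

/-- `α` is connected to `β`. -/
def Connected (α β : Module.Dual K A.H) : Prop :=
  ∃ (k : ℕ) (f : ℕ → Module.Dual K A.H),
    (∀ i ≤ k, f i ∈ A.roots) ∧
    (∃ n : ℕ, f 0 = A.twist^[n] α) ∧
    (∀ i < k, A.chainSums f i ∈ A.roots) ∧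
    (∃ m : ℕ, A.chainSums f k = A.twist^[m] β ∨ A.chainSums f k = -(A.twist^[m] β))

/-- Symmetric root system. -/
def SymmetricRoots : Prop := ∀ α ∈ A.roots, -α ∈ A.roots

/-- `[L_α, L_{-α}]` as a submodule (its span). -/
def bracketSpan (α : Module.Dual K A.H) : Submodule K L :=
  Submodule.span K
    (Set.image2 (fun x y => A.bracket x y) (A.rootSpace α : Set L) (A.rootSpace (-α) : Set L))

/-- The connection class of `α`. -/
def cls (α : Module.Dual K A.H) : Set (Module.Dual K A.H) :=
  {β | β ∈ A.roots ∧ A.Connected α β}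

def I0 (α : Module.Dual K A.H) : Submodule K L := ⨆ β ∈ A.cls α, A.bracketSpan β

def Vcls (α : Module.Dual K A.H) : Submodule K L := ⨆ β ∈ A.cls α, A.rootSpace β

/-- The ideal associated to the connection class of `α`. -/
def Icls (α : Module.Dual K A.H) : Submodule K L := A.I0 α ⊔ A.Vcls α

/-- Ideals of a Hom-Leibniz algebra. -/
def IsIdeal (I : Submodule K L) : Prop :=
  (∀ x ∈ I, ∀ y : L, A.bracket x y ∈ I ∧ A.bracket y x ∈ I) ∧
    I.map A.φ.toLinearMap = I

/-- The ideal `J` generated by the squares `[x,x]`. -/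
def J : Submodule K L :=
  sInf {I : Submodule K L | A.IsIdeal I ∧ ∀ x : L, A.bracket x x ∈ I}

/-- The annihilator `Z(L)`. -/
def annihilator : Set L :=
  {x | ∀ y : L, A.bracket x y = 0 ∧ A.bracket y x = 0}


/-- The candidate ideal attached to a set of roots. -/
def IOfClass (S : Set (Module.Dual K A.H)) : Submodule K L :=
  (⨆ β ∈ S, A.bracketSpan β) ⊔ (⨆ β ∈ S, A.rootSpace β)

/-- Maximal length: every root space is one-dimensional. -/
def MaximalLength : Prop := ∀ α ∈ A.roots, Module.finrank K (A.rootSpace α) = 1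

/-- `L = [L,L]`. -/
def BracketGenerates : Prop :=
  Submodule.span K {z : L | ∃ x y : L, z = A.bracket x y} = ⊤

/-- The roots `α` with `L_α ⊆ J`. -/
def rootsJ : Set (Module.Dual K A.H) := {α ∈ A.roots | A.rootSpace α ≤ A.J}

/-- The roots `α` with `L_α ∩ J = 0`. -/
def rootsNotJ : Set (Module.Dual K A.H) := {α ∈ A.roots | A.rootSpace α ⊓ A.J = ⊥}

/-- Root-multiplicativity for split regular Hom-Leibniz algebras of maximal length. -/
def RootMultiplicative : Prop :=
  (∀ α ∈ A.rootsNotJ, ∀ β ∈ A.rootsNotJ, A.twist α + A.twist β ∈ A.roots →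
    ∃ x ∈ A.rootSpace α, ∃ y ∈ A.rootSpace β, A.bracket x y ≠ 0) ∧
  (∀ α ∈ A.rootsNotJ, ∀ γ ∈ A.rootsJ, A.twist α + A.twist γ ∈ A.rootsJ →
    ∃ x ∈ A.rootSpace α, ∃ y ∈ A.rootSpace γ, A.bracket x y ≠ 0)

/-- `α` is `¬J`-connected to `β` (both in `Λ^γ`, given by the set `S`):
there is a chain whose elements beyond the first lie in `Λ^{¬J}` and whose twisted
partial sums lie in `Λ^γ`. -/
def NotJConnected (S : Set (Module.Dual K A.H)) (α β : Module.Dual K A.H) : Prop :=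
  ∃ (k : ℕ) (f : ℕ → Module.Dual K A.H),
    (∀ i, 1 ≤ i → i ≤ k → f i ∈ A.rootsNotJ) ∧
    (∃ n : ℕ, f 0 = A.twist^[n] α) ∧
    (∀ i ≤ k, A.chainSums f i ∈ S) ∧
    (∃ m : ℕ, A.chainSums f k = A.twist^[m] β ∨ A.chainSums f k = -(A.twist^[m] β))

/-- Triviality of the Lie-annihilator `Z_Lie(L)`. -/
def LieAnnZero : Prop := ∀ x : L,
  (∀ y ∈ A.H ⊔ ⨆ α ∈ A.rootsNotJ, A.rootSpace α,
    A.bracket x y = 0 ∧ A.bracket y x = 0) → x = 0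

end SplitRegularHomLeibniz

section AuxZtwist

variable {K L : Type*} [Field K] [AddCommGroup L] [Module K L]

/-- The subgroup of pairs of automorphisms (of `L` and of `H`) that are compatible with
the bracket and with the inclusion `H → L`. -/
private def compatSub (A : SplitRegularHomLeibniz K L) :
    Subgroup ((L ≃ₗ[K] L) × (A.H ≃ₗ[K] A.H)) where
  carrier := {p | (∀ x y : L, p.1 (A.bracket x y) = A.bracket (p.1 x) (p.1 y)) ∧
    ∀ h : A.H, ((p.2 h : L) = p.1 h)}
  one_mem' := ⟨fun _ _ => rfl, fun _ => rfl⟩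
  mul_mem' := by
    rintro p q ⟨hp1, hp2⟩ ⟨hq1, hq2⟩
    refine ⟨fun x y => ?_, fun h => ?_⟩
    · show p.1 (q.1 (A.bracket x y)) = A.bracket (p.1 (q.1 x)) (p.1 (q.1 y))
      rw [hq1, hp1]
    · show ((p.2 (q.2 h) : L)) = p.1 (q.1 h)
      rw [hp2, hq2]
  inv_mem' := by
    rintro p ⟨hp1, hp2⟩
    refine ⟨fun x y => ?_, fun h => ?_⟩
    · show p.1.symm (A.bracket x y) = A.bracket (p.1.symm x) (p.1.symm y)
      apply p.1.injective
      rw [hp1, p.1.apply_symm_apply, p.1.apply_symm_apply, p.1.apply_symm_apply]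
    · show ((p.2.symm h : L)) = p.1.symm h
      apply p.1.injective
      rw [p.1.apply_symm_apply, ← hp2, p.2.apply_symm_apply]

private lemma compat_zpow (A : SplitRegularHomLeibniz K L) (z : ℤ) :
    (∀ x y : L, (A.φ ^ z) (A.bracket x y) = A.bracket ((A.φ ^ z) x) ((A.φ ^ z) y)) ∧
    ∀ h : A.H, ((A.φH ^ z) h : L) = (A.φ ^ z) h := by
  have hmem : (A.φ, A.φH) ∈ compatSub A := ⟨A.φ_bracket, fun h => A.φH_spec h⟩
  have hz := Subgroup.zpow_mem (compatSub A) hmem z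
  have h1 : ((A.φ, A.φH) ^ z).1 = A.φ ^ z := rfl
  have h2 : ((A.φ, A.φH) ^ z).2 = A.φH ^ z := rfl
  obtain ⟨ha, hb⟩ := hz
  rw [h1] at ha
  rw [h1, h2] at hb
  exact ⟨ha, hb⟩

private lemma aux_mul_apply (f g : L ≃ₗ[K] L) (x : L) : (f * g) x = f (g x) := rfl

private lemma zpow_neg_cancel (f : L ≃ₗ[K] L) (z : ℤ) (x : L) :
    (f ^ z) ((f ^ (-z)) x) = x := by
  rw [← aux_mul_apply, ← zpow_add, add_neg_cancel, zpow_zero]; rfl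

end AuxZtwist



open SplitRegularHomLeibniz in
theorem root_ztwist_mem {K L : Type*} [Field K] [AddCommGroup L] [Module K L]
    (A : SplitRegularHomLeibniz K L)
    (hsplit : A.IsSplit) (hmax : A.MaximalAbelian)
    (α : Module.Dual K A.H) (hα : α ∈ A.roots) :
    ∀ z : ℤ, A.ztwist z α ∈ A.roots := by
  intro z
  obtain ⟨hα0, hαs⟩ := hα
  obtain ⟨hbr, hcomp⟩ := compat_zpow A z
  obtain ⟨_, hcompneg⟩ := compat_zpow A (-z)
  constructor
  · -- the twisted functional is nonzero
    intro h0
    apply hα0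
    ext h
    have : A.ztwist z α ((A.φH ^ (-z)).symm h) = 0 := by rw [h0]; rfl
    simpa only [SplitRegularHomLeibniz.ztwist, LinearMap.comp_apply, LinearEquiv.coe_coe,
      LinearEquiv.apply_symm_apply, LinearMap.zero_apply] using this
  · -- the twisted root space is nonzero
    obtain ⟨v, hv, hv0⟩ := (Submodule.ne_bot_iff _).mp hαs
    rw [Submodule.ne_bot_iff]
    refine ⟨(A.φ ^ z) v, ?_, fun h0 => hv0 ((A.φ ^ z).map_eq_zero_iff.mp h0)⟩
    intro h
    set h' : A.H := (A.φH ^ (-z)) h with hh'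
    have hcoe : (h' : L) = (A.φ ^ (-z)) h := hcompneg h
    have key : A.bracket ((A.φ ^ z) v) (h : L) = (A.φ ^ z) (A.bracket v (h' : L)) := by
      rw [hbr, hcoe, zpow_neg_cancel]
    rw [key, hv h', map_smul]
    have hφcomm : (A.φ ^ z) (A.φ v) = A.φ ((A.φ ^ z) v) := by
      rw [← aux_mul_apply, ← aux_mul_apply, ← zpow_one_add, ← zpow_add_one, add_comm]
    rw [hφcomm]
    rfl
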